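/- Let C ≥ 2 and let ℓ : Δ^{C−1} → ℝ^C be a proper loss such that ℓ ∘ Π^{-1} is continuously differentiable on the interior of Δ̃^{C−1}, and let L̲̃(p̃) = L(Π^{-1}(p̃), Π^{-1}(p̃)) be the projected conditional Bayes risk. Then for every p̃ in the interior of Δ̃^{C−1}, writing p_C = 1 − Σ_{i=1}^{C−1} p̃_i, the C × (C−1) Jacobian of ℓ ∘ Π^{-1} is given in block form by: its upper (C−1) × (C−1) block equals (I_{C−1} − 1_{C−1} p̃^T) H_{L̲̃}(p̃) and its last row equals −(p̃^T / p_C)(I_{C−1} − 1_{C−1} p̃^T) H_{L̲̃}(p̃), where H_{L̲̃}(p̃) is the Hessian of L̲̃ at p̃. -/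

import Mathlib

noncomputable section

/-- The probability simplex `Δ^C ⊆ ℝ^{d+1}` (here `C = d+1`). -/
def simplex (n : ℕ) : Set (Fin n → ℝ) :=
  {p | (∀ i, 0 ≤ p i) ∧ ∑ i, p i = 1}

/-- The interior of the projected probability simplex `Δ̃^{C-1} ⊆ ℝ^{C-1}` (here `C-1 = d`). -/
def projInterior (d : ℕ) : Set (Fin d → ℝ) :=
  {p | (∀ i, 0 < p i) ∧ ∑ i, p i < 1}

/-- The inverse projection `Π⁻¹ : Δ̃^{C-1} → Δ^{C-1}`,
`p̃ ↦ (p̃₁, …, p̃_{C-1}, 1 - ∑ i, p̃ i)`. -/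
def piInv (d : ℕ) (p : Fin d → ℝ) : Fin (d + 1) → ℝ :=
  Fin.snoc p (1 - ∑ i, p i)

/-- The conditional risk `L(p,q) = ∑ i, p i * ℓ_i(q)` of a loss `ℓ`. -/
def condRisk {n : ℕ} (ℓ : (Fin n → ℝ) → (Fin n → ℝ)) (p q : Fin n → ℝ) : ℝ :=
  ∑ i, p i * ℓ q i

/-- A loss is proper if `L(p,p) ≤ L(p,q)` on the simplex. -/
def Proper {n : ℕ} (ℓ : (Fin n → ℝ) → (Fin n → ℝ)) : Prop :=
  ∀ p ∈ simplex n, ∀ q ∈ simplex n, condRisk ℓ p p ≤ condRisk ℓ p q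

/-- The composition `ℓ ∘ Π⁻¹ : ℝ^{C-1} → ℝ^C`. -/
def lossComp (d : ℕ) (ℓ : (Fin (d + 1) → ℝ) → (Fin (d + 1) → ℝ)) :
    (Fin d → ℝ) → (Fin (d + 1) → ℝ) :=
  fun x => ℓ (piInv d x)

/-- The projected conditional Bayes risk `L̲̃(p̃) = L(Π⁻¹ p̃, Π⁻¹ p̃)`. -/
def projBayes (d : ℕ) (ℓ : (Fin (d + 1) → ℝ) → (Fin (d + 1) → ℝ)) :
    (Fin d → ℝ) → ℝ :=
  fun x => condRisk ℓ (piInv d x) (piInv d x)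

/-- The gradient `∇L̲̃` of the projected conditional Bayes risk. -/
def gradPB (d : ℕ) (ℓ : (Fin (d + 1) → ℝ) → (Fin (d + 1) → ℝ)) :
    (Fin d → ℝ) → (Fin d → ℝ) :=
  fun x i => fderiv ℝ (projBayes d ℓ) x (Pi.single i 1)

/-- The Hessian `H_{L̲̃}(x) i j = ∂_j ∂_i L̲̃ (x)` of the projected conditional Bayes risk. -/
def hessPB (d : ℕ) (ℓ : (Fin (d + 1) → ℝ) → (Fin (d + 1) → ℝ))
    (x : Fin d → ℝ) (i j : Fin d) : ℝ :=
  fderiv ℝ (gradPB d ℓ) x (Pi.single j 1) i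

/-- The canonical link `ψ̃ = -∇L̲̃`. -/
def canLink (d : ℕ) (ℓ : (Fin (d + 1) → ℝ) → (Fin (d + 1) → ℝ)) :
    (Fin d → ℝ) → (Fin d → ℝ) :=
  fun x i => -(gradPB d ℓ x i)

end

noncomputable section Aux

lemma isOpen_projInterior (d : ℕ) : IsOpen (projInterior d) := by
  have h1 : IsOpen {p : Fin d → ℝ | ∀ i, 0 < p i} := by
    rw [show {p : Fin d → ℝ | ∀ i, 0 < p i} = ⋂ i, {p | 0 < p i} by ext p; simp]
    exact isOpen_iInter_of_finite fun i =>
      isOpen_lt continuous_const (continuous_apply i)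
  have h2 : IsOpen {p : Fin d → ℝ | ∑ i, p i < 1} :=
    isOpen_lt (continuous_finset_sum _ fun i _ => continuous_apply i) continuous_const
  exact h1.inter h2

lemma piInv_mem_simplex {d : ℕ} {p : Fin d → ℝ} (hp : p ∈ projInterior d) :
    piInv d p ∈ simplex (d + 1) := by
  obtain ⟨h1, h2⟩ := hp
  constructor
  · intro i
    induction i using Fin.lastCases with
    | last => simp [piInv]; linarith
    | cast k => simpa [piInv] using (h1 k).le
  · rw [Fin.sum_univ_castSucc]
    simp [piInv]

/-- derivative of the `i`-th component of `piInv`. -/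
def piInvDer (d : ℕ) (i : Fin (d + 1)) : (Fin d → ℝ) →L[ℝ] ℝ :=
  Fin.lastCases (-(∑ k, ContinuousLinearMap.proj k)) (fun k => ContinuousLinearMap.proj k) i

lemma hasFDerivAt_piInv (d : ℕ) (i : Fin (d + 1)) (x : Fin d → ℝ) :
    HasFDerivAt (fun y => piInv d y i) (piInvDer d i) x := by
  induction i using Fin.lastCases with
  | last =>
      simp only [piInv, Fin.snoc_last, piInvDer, Fin.lastCases_last]
      exact HasFDerivAt.const_sub (HasFDerivAt.fun_sum fun k _ =>
        hasFDerivAt_apply k x) 1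
  | cast k =>
      simp only [piInv, Fin.snoc_castSucc, piInvDer, Fin.lastCases_castSucc]
      exact hasFDerivAt_apply k x

end Aux
noncomputable section Aux2
open ContinuousLinearMap

lemma stationary (d : ℕ) (ℓ : (Fin (d + 1) → ℝ) → (Fin (d + 1) → ℝ)) (hproper : Proper ℓ)
    (hdiff : ∀ pt ∈ projInterior d, ContDiffAt ℝ 1 (lossComp d ℓ) pt)
    {pt : Fin d → ℝ} (hpt : pt ∈ projInterior d) (v : Fin d → ℝ) :
    ∑ i, piInv d pt i * fderiv ℝ (lossComp d ℓ) pt v i = 0 := by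
  have hF : HasFDerivAt (lossComp d ℓ) (fderiv ℝ (lossComp d ℓ) pt) pt :=
    ((hdiff pt hpt).differentiableAt one_ne_zero).hasFDerivAt
  set F := fderiv ℝ (lossComp d ℓ) pt with hFdef
  have hg : HasFDerivAt (fun q => ∑ i, piInv d pt i * lossComp d ℓ q i)
      (∑ i, piInv d pt i • ((ContinuousLinearMap.proj i).comp F)) pt := by
    apply HasFDerivAt.fun_sum
    intro i _
    exact ((ContinuousLinearMap.proj i).hasFDerivAt.comp pt hF).const_mul (piInv d pt i)
  have hmin : IsLocalMin (fun q => ∑ i, piInv d pt i * lossComp d ℓ q i) pt := by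
    have hmem := (isOpen_projInterior d).mem_nhds hpt
    filter_upwards [hmem] with q hq
    have h1 := hproper (piInv d pt) (piInv_mem_simplex hpt) (piInv d q) (piInv_mem_simplex hq)
    simpa [condRisk, lossComp] using h1
  have h0 := hmin.hasFDerivAt_eq_zero hg
  have h2 := congrArg (fun (L : (Fin d → ℝ) →L[ℝ] ℝ) => L v) h0
  simpa [ContinuousLinearMap.sum_apply, smul_eq_mul] using h2

end Aux2
noncomputable section Aux3

lemma gradPB_eq (d : ℕ) (ℓ : (Fin (d + 1) → ℝ) → (Fin (d + 1) → ℝ)) (hproper : Proper ℓ)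
    (hdiff : ∀ pt ∈ projInterior d, ContDiffAt ℝ 1 (lossComp d ℓ) pt)
    {x : Fin d → ℝ} (hx : x ∈ projInterior d) :
    gradPB d ℓ x = fun j => lossComp d ℓ x j.castSucc - lossComp d ℓ x (Fin.last d) := by
  funext j
  have hF : HasFDerivAt (lossComp d ℓ) (fderiv ℝ (lossComp d ℓ) x) x :=
    ((hdiff x hx).differentiableAt one_ne_zero).hasFDerivAt
  set F := fderiv ℝ (lossComp d ℓ) x with hFdef
  have hcomp : ∀ i : Fin (d+1), HasFDerivAt (fun y => lossComp d ℓ y i)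
      ((ContinuousLinearMap.proj i).comp F) x := fun i =>
    hasFDerivAt_pi'.1 hF i
  have hPB : HasFDerivAt (projBayes d ℓ)
      (∑ i, (piInv d x i • ((ContinuousLinearMap.proj i).comp F)
             + lossComp d ℓ x i • piInvDer d i)) x := by
    have he : projBayes d ℓ = fun y => ∑ i, piInv d y i * lossComp d ℓ y i := rfl
    rw [he]
    exact HasFDerivAt.fun_sum fun i _ => (hasFDerivAt_piInv d i x).mul (hcomp i)
  have hfd : gradPB d ℓ x j
      = ∑ i, (piInv d x i * F (Pi.single j 1) i
             + lossComp d ℓ x i * piInvDer d i (Pi.single j 1)) := by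
    show fderiv ℝ (projBayes d ℓ) x (Pi.single j 1) = _
    rw [hPB.fderiv]
    simp [ContinuousLinearMap.sum_apply]
  rw [hfd, Finset.sum_add_distrib]
  rw [stationary d ℓ hproper hdiff hx (Pi.single j 1), zero_add]
  rw [Fin.sum_univ_castSucc]
  have hc : ∀ k : Fin d, piInvDer d k.castSucc (Pi.single j 1) = (Pi.single j (1:ℝ) : Fin d → ℝ) k := by
    intro k; simp [piInvDer]
  have hl : piInvDer d (Fin.last d) (Pi.single j 1) = -1 := by
    simp [piInvDer, Finset.sum_pi_single']
  simp only [hc, hl]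
  rw [Finset.sum_congr rfl (fun k _ => by rw [Pi.single_apply])]
  simp [mul_ite, Finset.sum_ite_eq', sub_eq_add_neg]

end Aux3
noncomputable section Aux4

lemma hessPB_eq (d : ℕ) (ℓ : (Fin (d + 1) → ℝ) → (Fin (d + 1) → ℝ)) (hproper : Proper ℓ)
    (hdiff : ∀ pt ∈ projInterior d, ContDiffAt ℝ 1 (lossComp d ℓ) pt)
    {pt : Fin d → ℝ} (hpt : pt ∈ projInterior d) (i j : Fin d) :
    hessPB d ℓ pt i j =
      fderiv ℝ (lossComp d ℓ) pt (Pi.single j 1) i.castSucc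
        - fderiv ℝ (lossComp d ℓ) pt (Pi.single j 1) (Fin.last d) := by
  have hF : HasFDerivAt (lossComp d ℓ) (fderiv ℝ (lossComp d ℓ) pt) pt :=
    ((hdiff pt hpt).differentiableAt one_ne_zero).hasFDerivAt
  set F := fderiv ℝ (lossComp d ℓ) pt with hFdef
  set G : (Fin d → ℝ) → (Fin d → ℝ) :=
    fun x k => lossComp d ℓ x k.castSucc - lossComp d ℓ x (Fin.last d) with hGdef
  have heq : gradPB d ℓ =ᶠ[nhds pt] G := by
    filter_upwards [(isOpen_projInterior d).mem_nhds hpt] with x hx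
    exact gradPB_eq d ℓ hproper hdiff hx
  have hG : HasFDerivAt G (ContinuousLinearMap.pi fun k =>
      (ContinuousLinearMap.proj k.castSucc).comp F
        - (ContinuousLinearMap.proj (Fin.last d)).comp F) pt := by
    apply hasFDerivAt_pi.2
    intro k
    exact (hasFDerivAt_pi'.1 hF k.castSucc).sub (hasFDerivAt_pi'.1 hF (Fin.last d))
  have : fderiv ℝ (gradPB d ℓ) pt = fderiv ℝ G pt := heq.fderiv_eq
  show fderiv ℝ (gradPB d ℓ) pt (Pi.single j 1) i = _
  rw [this, hG.fderiv]
  simp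

end Aux4


/-- For a proper loss with `ℓ ∘ Π⁻¹` continuously differentiable on the interior of the
projected simplex, the Jacobian of `ℓ ∘ Π⁻¹` is given blockwise by
upper block `(I - 1 ptᵀ) H_{L̲̃}(pt)` and last row `-(ptᵀ/p_C)(I - 1 ptᵀ) H_{L̲̃}(pt)`. -/
theorem stmt_8 (d : ℕ) (hd : 1 ≤ d)
    (ℓ : (Fin (d + 1) → ℝ) → (Fin (d + 1) → ℝ)) (hproper : Proper ℓ)
    (hdiff : ∀ pt ∈ projInterior d, ContDiffAt ℝ 1 (lossComp d ℓ) pt) :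
    ∀ pt ∈ projInterior d,
      (∀ i j : Fin d,
        fderiv ℝ (lossComp d ℓ) pt (Pi.single j 1) i.castSucc
          = hessPB d ℓ pt i j - ∑ k : Fin d, pt k * hessPB d ℓ pt k j) ∧
      (∀ j : Fin d,
        fderiv ℝ (lossComp d ℓ) pt (Pi.single j 1) (Fin.last d)
          = -(∑ i : Fin d,
                pt i * (hessPB d ℓ pt i j - ∑ k : Fin d, pt k * hessPB d ℓ pt k j))
              / (1 - ∑ k, pt k)) := by
  intro pt hpt
  obtain ⟨hpos, hsum⟩ := hpt
  have hpt' : pt ∈ projInterior d := ⟨hpos, hsum⟩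
  set S : ℝ := ∑ k, pt k with hS
  have hSne : (1 : ℝ) - S ≠ 0 := by rw [hS] at *; linarith
  -- abbreviations
  have key : ∀ j : Fin d,
      ∑ k : Fin d, pt k * fderiv ℝ (lossComp d ℓ) pt (Pi.single j 1) k.castSucc
        + (1 - S) * fderiv ℝ (lossComp d ℓ) pt (Pi.single j 1) (Fin.last d) = 0 := by
    intro j
    have h := stationary d ℓ hproper hdiff hpt' (Pi.single j 1)
    rw [Fin.sum_univ_castSucc] at h
    simpa [piInv] using h
  have hb : ∀ j : Fin d,
      fderiv ℝ (lossComp d ℓ) pt (Pi.single j 1) (Fin.last d)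
        = -∑ k : Fin d, pt k * hessPB d ℓ pt k j := by
    intro j
    have h := key j
    have hH : ∀ k : Fin d, hessPB d ℓ pt k j
        = fderiv ℝ (lossComp d ℓ) pt (Pi.single j 1) k.castSucc
          - fderiv ℝ (lossComp d ℓ) pt (Pi.single j 1) (Fin.last d) :=
      fun k => hessPB_eq d ℓ hproper hdiff hpt' k j
    set b := fderiv ℝ (lossComp d ℓ) pt (Pi.single j 1) (Fin.last d) with hbdef
    have : ∑ k : Fin d, pt k * hessPB d ℓ pt k j
        = ∑ k : Fin d, pt k * fderiv ℝ (lossComp d ℓ) pt (Pi.single j 1) k.castSucc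
          - S * b := by
      rw [hS, Finset.sum_mul]
      rw [← Finset.sum_sub_distrib]
      exact Finset.sum_congr rfl fun k _ => by rw [hH k]; ring
    rw [this]
    have hsum' : ∑ k : Fin d, pt k * fderiv ℝ (lossComp d ℓ) pt (Pi.single j 1) k.castSucc
        = -(1 - S) * b := by linarith
    rw [hsum']; ring
  constructor
  · intro i j
    have hH := hessPB_eq d ℓ hproper hdiff hpt' i j
    rw [hH, hb j]
    ring
  · intro j
    have h1 : ∑ i : Fin d,
        pt i * (hessPB d ℓ pt i j - ∑ k : Fin d, pt k * hessPB d ℓ pt k j)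
        = (1 - S) * ∑ k : Fin d, pt k * hessPB d ℓ pt k j := by
      rw [Finset.sum_congr rfl fun i _ => (mul_sub (pt i) _ _)]
      rw [Finset.sum_sub_distrib, ← Finset.sum_mul]
      rw [← hS]
      ring
    rw [h1, hb j]
    field_simp
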